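/- Let c ≥ 2 be an integer, let G be a finite simple undirected graph on a vertex set V of size n in which every vertex has degree at least n/c − 1, and let α be a natural number satisfying 2^c·α < n/c − 1. Then every equivalence class of the relation ~_α on V has size at least n/c (i.e., c·|U| ≥ n for every class U). -/

import Mathlib

open Finset

/-- Number of edges of `G` with one endpoint in `S` and the other in `T`
(for disjoint `S`, `T`, each such edge is counted exactly once as an ordered pair). -/
def crossEdges {V : Type*} [Fintype V] [DecidableEq V] (G : SimpleGraph V)
    [DecidableRel G.Adj] (S T : Finset V) : ℕ :=
  ((S ×ˢ T).filter fun p => G.Adj p.1 p.2).card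

/-- Number of edges of `G` with exactly one endpoint in `S`. -/
def cutEdges {V : Type*} [Fintype V] [DecidableEq V] (G : SimpleGraph V)
    [DecidableRel G.Adj] (S : Finset V) : ℕ :=
  crossEdges G S Sᶜ

/-- The equivalence relation `~_α`: `u ~_α v` iff for every `S` with `|edges_G(S)| ≤ α`,
`u ∈ S ↔ v ∈ S`. -/
def cutRel {V : Type*} [Fintype V] [DecidableEq V] (G : SimpleGraph V)
    [DecidableRel G.Adj] (α : ℕ) (u v : V) : Prop :=
  ∀ S : Finset V, cutEdges G S ≤ α → (u ∈ S ↔ v ∈ S)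

instance {V : Type*} [Fintype V] [DecidableEq V] (G : SimpleGraph V)
    [DecidableRel G.Adj] (α : ℕ) (u v : V) : Decidable (cutRel G α u v) :=
  inferInstanceAs (Decidable (∀ S : Finset V, cutEdges G S ≤ α → (u ∈ S ↔ v ∈ S)))

/-- The `~_α`-equivalence class of a vertex `v`. -/
def cutClass {V : Type*} [Fintype V] [DecidableEq V] (G : SimpleGraph V)
    [DecidableRel G.Adj] (α : ℕ) (v : V) : Finset V :=
  Finset.univ.filter fun u => cutRel G α u v

/-- The set of all `~_α`-equivalence classes. -/
def cutClasses {V : Type*} [Fintype V] [DecidableEq V] (G : SimpleGraph V)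
    [DecidableRel G.Adj] (α : ℕ) : Finset (Finset V) :=
  Finset.univ.image (cutClass G α)

section aux
variable {V : Type*} [Fintype V] [DecidableEq V] (G : SimpleGraph V) [DecidableRel G.Adj]

lemma crossEdges_comm (S T : Finset V) : crossEdges G S T = crossEdges G T S := by
  unfold crossEdges
  apply Finset.card_bij' (fun p _ => Prod.swap p) (fun p _ => Prod.swap p)
  · intro p hp
    simp only [mem_filter, mem_product, Prod.swap] at *
    exact ⟨⟨hp.1.2, hp.1.1⟩, hp.2.symm⟩
  · intro p hp
    simp only [mem_filter, mem_product, Prod.swap] at *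
    exact ⟨⟨hp.1.2, hp.1.1⟩, hp.2.symm⟩
  · intro p _; rfl
  · intro p _; rfl

lemma cutEdges_compl (S : Finset V) : cutEdges G Sᶜ = cutEdges G S := by
  unfold cutEdges
  rw [compl_compl]
  exact crossEdges_comm G Sᶜ S

lemma cutEdges_univ : cutEdges G (univ : Finset V) = 0 := by
  simp [cutEdges, crossEdges]

lemma cutEdges_inter_le (A S : Finset V) :
    cutEdges G (A ∩ S) ≤ cutEdges G A + cutEdges G S := by
  unfold cutEdges crossEdges
  calc (((A ∩ S) ×ˢ (A ∩ S)ᶜ).filter fun p => G.Adj p.1 p.2).card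
      ≤ (((A ×ˢ Aᶜ).filter fun p => G.Adj p.1 p.2) ∪
         ((S ×ˢ Sᶜ).filter fun p => G.Adj p.1 p.2)).card := by
        apply Finset.card_le_card
        intro p hp
        simp only [mem_filter, mem_product, mem_union, mem_compl, mem_inter] at *
        tauto
    _ ≤ _ := Finset.card_union_le _ _

lemma cutEdges_sdiff_le (A S : Finset V) :
    cutEdges G (A \ S) ≤ cutEdges G A + cutEdges G S := by
  rw [sdiff_eq]
  calc cutEdges G (A ∩ Sᶜ) ≤ cutEdges G A + cutEdges G Sᶜ := cutEdges_inter_le G A Sᶜ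
    _ = cutEdges G A + cutEdges G S := by rw [cutEdges_compl]

lemma master (c : ℕ) (hdeg : ∀ v : V, Fintype.card V ≤ c * (G.degree v + 1))
    (S : Finset V) : S.card * Fintype.card V ≤ c * (S.card * S.card) + c * cutEdges G S := by
  have hsum : ∑ v ∈ S, G.degree v
      = ((S ×ˢ (univ : Finset V)).filter fun p => G.Adj p.1 p.2).card := by
    rw [Finset.card_filter, Finset.sum_product]
    refine Finset.sum_congr rfl fun v _ => ?_
    rw [← Finset.card_filter, SimpleGraph.degree, SimpleGraph.neighborFinset_eq_filter]
  have hsplit : ((S ×ˢ (univ : Finset V)).filter fun p => G.Adj p.1 p.2).card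
      = ((S ×ˢ S).filter fun p => G.Adj p.1 p.2).card + cutEdges G S := by
    unfold cutEdges crossEdges
    rw [← Finset.card_union_of_disjoint, ← Finset.filter_union, ← Finset.product_union,
      Finset.union_compl]
    · exact Finset.disjoint_filter_filter (Finset.disjoint_left.mpr
        (by intro p hp hp'
            simp only [mem_product, mem_compl] at *
            exact hp'.2 hp.2))
  have hin : ((S ×ˢ S).filter fun p => G.Adj p.1 p.2).card ≤ S.card * S.card - S.card := by
    rw [← Finset.offDiag_card]
    apply Finset.card_le_card
    intro p hp
    simp only [mem_filter, mem_product, Finset.mem_offDiag] at *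
    exact ⟨hp.1.1, hp.1.2, hp.2.ne⟩
  have hdegS : ∀ v ∈ S, Fintype.card V ≤ c * (G.degree v + 1) := fun v _ => hdeg v
  have h1 : S.card * Fintype.card V ≤ ∑ v ∈ S, c * (G.degree v + 1) := by
    calc S.card * Fintype.card V = ∑ _v ∈ S, Fintype.card V := by
          rw [Finset.sum_const, smul_eq_mul]
      _ ≤ _ := Finset.sum_le_sum hdegS
  have h2 : ∑ v ∈ S, c * (G.degree v + 1) = c * (∑ v ∈ S, G.degree v) + c * S.card := by
    rw [← Finset.mul_sum, Finset.sum_add_distrib, Finset.sum_const, smul_eq_mul, mul_add,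
      mul_one]
  have hsle : S.card ≤ S.card * S.card := by nlinarith [Nat.zero_le S.card]
  have A1 : S.card * Fintype.card V
      ≤ c * (((S ×ˢ S).filter fun p => G.Adj p.1 p.2).card + cutEdges G S) + c * S.card := by
    rw [← hsplit, ← hsum]
    exact h1.trans (le_of_eq h2) |>.trans (by rw [hsum, hsplit])
  have A3 : c * (((S ×ˢ S).filter fun p => G.Adj p.1 p.2).card + cutEdges G S)
      ≤ c * ((S.card * S.card - S.card) + cutEdges G S) :=
    Nat.mul_le_mul_left _ (Nat.add_le_add_right hin _)
  have A4 : c * ((S.card * S.card - S.card) + cutEdges G S) + c * S.card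
      = c * (S.card * S.card) + c * cutEdges G S := by
    have h : (S.card * S.card - S.card + cutEdges G S) + S.card
        = S.card * S.card + cutEdges G S := by omega
    rw [← mul_add, h, mul_add]
  calc S.card * Fintype.card V
      ≤ c * (((S ×ˢ S).filter fun p => G.Adj p.1 p.2).card + cutEdges G S) + c * S.card := A1
    _ ≤ c * ((S.card * S.card - S.card) + cutEdges G S) + c * S.card :=
        Nat.add_le_add_right A3 _
    _ = c * (S.card * S.card) + c * cutEdges G S := A4
end aux

lemma two_pow_quad : ∀ m : ℕ, (m + 2) * (m + 1) ≤ 2 ^ (m + 2) := by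
  intro m
  induction m with
  | zero => norm_num
  | succ k ih =>
    rcases k with _ | k'
    · norm_num
    · have h : (2:ℕ) ^ (k' + 1 + 1 + 2) = 2 * 2 ^ (k' + 1 + 2) := by ring
      rw [h]
      nlinarith [ih]

lemma c_mul_pred_le (c : ℕ) (hc : 2 ≤ c) : c * (c - 1) ≤ 2 ^ c := by
  obtain ⟨m, rfl⟩ : ∃ m, c = m + 2 := ⟨c - 2, by omega⟩
  have := two_pow_quad m
  have h : m + 2 - 1 = m + 1 := by omega
  rw [h]
  exact this

lemma two_mul_le_pow (c : ℕ) (hc : 2 ≤ c) : 2 * c ≤ 2 ^ c := by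
  obtain ⟨m, rfl⟩ : ∃ m, c = m + 1 := ⟨c - 1, by omega⟩
  have h := Nat.lt_two_pow_self (n := m)
  calc 2 * (m + 1) ≤ 2 * 2 ^ m := by omega
    _ = 2 ^ (m + 1) := by ring

lemma dichA {V : Type*} [Fintype V] [DecidableEq V] (G : SimpleGraph V) [DecidableRel G.Adj]
    (c α : ℕ) (hc : 2 ≤ c)
    (hdeg : ∀ v : V, Fintype.card V ≤ c * (G.degree v + 1))
    (hα : c * (2 ^ c * α + 1) < Fintype.card V)
    (β : ℕ) (hβ : c * β ≤ 2 ^ c * α)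
    (S : Finset V) (hS : S.Nonempty) (hcut : cutEdges G S ≤ β) :
    Fintype.card V ≤ c * S.card := by
  by_contra hlt
  push_neg at hlt
  obtain ⟨k, hk⟩ : ∃ k, S.card = k := ⟨_, rfl⟩
  obtain ⟨n, hn⟩ : ∃ n, Fintype.card V = n := ⟨_, rfl⟩
  rw [hk, hn] at hlt
  rw [hn] at hα
  have hk1 : 1 ≤ k := hk ▸ hS.card_pos
  have hm : k * n ≤ c * (k * k) + c * cutEdges G S := by
    have := master G c hdeg S
    rwa [hk, hn] at this
  have hm' : k * n ≤ c * (k * k) + c * β :=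
    hm.trans (Nat.add_le_add_left (Nat.mul_le_mul_left _ hcut) _)
  obtain ⟨e, he1, hne⟩ : ∃ e, 1 ≤ e ∧ n = c * k + e := ⟨n - c * k, by omega, by omega⟩
  have hkd : k * e ≤ c * β := by nlinarith [hm', hne]
  obtain ⟨k', rfl⟩ : ∃ k', k = k' + 1 := ⟨k - 1, by omega⟩
  obtain ⟨e', rfl⟩ : ∃ e', e = e' + 1 := ⟨e - 1, by omega⟩
  have hke : (k' + 1) + (e' + 1) ≤ (k' + 1) * (e' + 1) + 1 := by nlinarith [Nat.zero_le (k' * e')]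
  have hfin : n ≤ c * (2 ^ c * α + 1) := by
    calc n = c * (k' + 1) + (e' + 1) := hne
      _ ≤ c * ((k' + 1) + (e' + 1)) := by nlinarith [hc]
      _ ≤ c * ((k' + 1) * (e' + 1) + 1) := Nat.mul_le_mul_left _ hke
      _ ≤ c * (c * β + 1) := Nat.mul_le_mul_left _ (by omega)
      _ ≤ c * (2 ^ c * α + 1) := Nat.mul_le_mul_left _ (by omega)
  omega

lemma main_aux {V : Type*} [Fintype V] [DecidableEq V] (G : SimpleGraph V)
    [DecidableRel G.Adj] (c α : ℕ) (hc : 2 ≤ c)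
    (hdeg : ∀ v : V, Fintype.card V ≤ c * (G.degree v + 1))
    (hα : c * (2 ^ c * α + 1) < Fintype.card V) :
    ∀ A : Finset V, ∀ i : ℕ, ∀ u : V, u ∈ A → cutClass G α u ⊆ A →
      cutEdges G A ≤ i * α →
      i * Fintype.card V ≤ c * (Fintype.card V - A.card) →
      Fintype.card V ≤ c * (cutClass G α u).card := by
  intro A
  induction A using Finset.strongInductionOn with
  | _ A ih =>
  intro i u huA hsub hcutA hinv
  have hn1 : 1 ≤ Fintype.card V := by omega
  have hA1 : 1 ≤ A.card := Finset.card_pos.mpr ⟨u, huA⟩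
  have hcard : A.card ≤ Fintype.card V := Finset.card_le_univ A
  have hcpred : c * (c - 1) ≤ 2 ^ c := c_mul_pred_le c hc
  -- i + 1 is at most c
  have hialpha : i + 1 ≤ c := by
    by_contra hgt
    push_neg at hgt
    have h1 : c * Fintype.card V ≤ i * Fintype.card V :=
      Nat.mul_le_mul_right _ (by omega)
    have h2 : c * (Fintype.card V - A.card) ≤ c * (Fintype.card V - 1) :=
      Nat.mul_le_mul_left c (by omega)
    have h4 : Fintype.card V ≤ Fintype.card V - 1 :=
      Nat.le_of_mul_le_mul_left ((h1.trans hinv).trans h2) (by omega)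
    omega
  have hAbig : Fintype.card V ≤ c * A.card := by
    refine dichA G c α hc hdeg hα (i * α) ?_ A ⟨u, huA⟩ hcutA
    calc c * (i * α) = (c * i) * α := by ring
      _ ≤ (c * (c - 1)) * α := Nat.mul_le_mul_right α (Nat.mul_le_mul_left c (by omega))
      _ ≤ 2 ^ c * α := Nat.mul_le_mul_right α hcpred
  by_cases hAU : cutClass G α u = A
  · rw [hAU]; exact hAbig
  · obtain ⟨w, hwA, hwn⟩ := (Finset.ssubset_iff_of_subset hsub).mp
      (lt_of_le_of_ne hsub hAU)
    have hwrel : ¬ cutRel G α w u := by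
      intro h
      exact hwn (by simp [cutClass, Finset.mem_filter, h])
    rw [cutRel] at hwrel
    push_neg at hwrel
    obtain ⟨S0, hS0cut, hS0iff⟩ := hwrel
    obtain ⟨S, hScut, huS, hwS⟩ :
        ∃ S : Finset V, cutEdges G S ≤ α ∧ u ∈ S ∧ w ∉ S := by
      rcases hS0iff with ⟨hw0, hu0⟩ | ⟨hw0, hu0⟩
      · exact ⟨S0ᶜ, by rwa [cutEdges_compl], Finset.mem_compl.mpr hu0,
          fun h => (Finset.mem_compl.mp h) hw0⟩
      · exact ⟨S0, hS0cut, hu0, hw0⟩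
    have hsplitcard : (A ∩ S).card + (A \ S).card = A.card :=
      Finset.card_inter_add_card_sdiff A S
    have huA' : u ∈ A ∩ S := Finset.mem_inter.mpr ⟨huA, huS⟩
    have hsubA' : cutClass G α u ⊆ A ∩ S := by
      intro v hv
      have hrel : cutRel G α v u := by
        simpa [cutClass, Finset.mem_filter] using hv
      exact Finset.mem_inter.mpr ⟨hsub hv, (hrel S hScut).mpr huS⟩
    have hwT : w ∈ A \ S := Finset.mem_sdiff.mpr ⟨hwA, hwS⟩
    have hcutA'2 : cutEdges G (A ∩ S) ≤ (i + 1) * α := by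
      calc cutEdges G (A ∩ S) ≤ cutEdges G A + cutEdges G S := cutEdges_inter_le G A S
        _ ≤ i * α + α := Nat.add_le_add hcutA hScut
        _ = (i + 1) * α := by ring
    have hcutT : cutEdges G (A \ S) ≤ (i + 1) * α := by
      calc cutEdges G (A \ S) ≤ cutEdges G A + cutEdges G S := cutEdges_sdiff_le G A S
        _ ≤ i * α + α := Nat.add_le_add hcutA hScut
        _ = (i + 1) * α := by ring
    have hA'ss : A ∩ S ⊂ A := (Finset.ssubset_iff_of_subset Finset.inter_subset_left).mpr
      ⟨w, hwA, fun h => hwS (Finset.mem_inter.mp h).2⟩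
    by_cases hi2 : i + 2 ≤ c
    · -- still budget: the removed piece is big, recurse
      have hT : Fintype.card V ≤ c * (A \ S).card := by
        refine dichA G c α hc hdeg hα ((i + 1) * α) ?_ (A \ S) ⟨w, hwT⟩ hcutT
        calc c * ((i + 1) * α) = (c * (i + 1)) * α := by ring
          _ ≤ (c * (c - 1)) * α := Nat.mul_le_mul_right α (Nat.mul_le_mul_left c (by omega))
          _ ≤ 2 ^ c * α := Nat.mul_le_mul_right α hcpred
      refine ih (A ∩ S) hA'ss (i + 1) u huA' hsubA' hcutA'2 ?_
      have hsum : (Fintype.card V - A.card) + (A \ S).card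
          = Fintype.card V - (A ∩ S).card := by omega
      calc (i + 1) * Fintype.card V = i * Fintype.card V + Fintype.card V := by ring
        _ ≤ c * (Fintype.card V - A.card) + c * (A \ S).card := Nat.add_le_add hinv hT
        _ = c * (Fintype.card V - (A ∩ S).card) := by rw [← Nat.mul_add, hsum]
    · exfalso
      have hieq : i + 1 = c := by omega
      have e1 : c * (Fintype.card V - A.card) + c * A.card = c * Fintype.card V := by
        rw [← Nat.mul_add]
        congr 1
        omega
      have e1' : i * Fintype.card V + Fintype.card V = c * Fintype.card V := by
        calc i * Fintype.card V + Fintype.card V = (i + 1) * Fintype.card V := by ring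
          _ = c * Fintype.card V := by rw [hieq]
      have h1 : c * A.card ≤ Fintype.card V := by linarith [hinv, e1, e1']
      have hT1 : 1 ≤ (A \ S).card := Finset.card_pos.mpr ⟨w, hwT⟩
      have hA'1 : 1 ≤ (A ∩ S).card := Finset.card_pos.mpr ⟨u, huA'⟩
      have hTle : c * (A \ S).card + c ≤ Fintype.card V := by
        have e2 : c * (A ∩ S).card + c * (A \ S).card = c * A.card := by
          rw [← Nat.mul_add, hsplitcard]
        have e3 : c * 1 ≤ c * (A ∩ S).card := Nat.mul_le_mul_left c hA'1
        linarith [e2, h1, e3]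
      have hcutT' : cutEdges G (A \ S) ≤ c * α := by
        rw [← hieq]
        exact hcutT
      obtain ⟨t, ht⟩ : ∃ t, (A \ S).card = t := ⟨_, rfl⟩
      rw [ht] at hTle hT1
      have hmT : t * Fintype.card V ≤ c * (t * t) + c * (c * α) := by
        have hm := master G c hdeg (A \ S)
        rw [ht] at hm
        exact hm.trans (Nat.add_le_add_left (Nat.mul_le_mul_left c hcutT') _)
      have f5 : 2 * c ≤ 2 ^ c := two_mul_le_pow c hc
      have e_a : c * t ≤ c * (c * α) := by
        have h := Nat.mul_le_mul_left t hTle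
        have h' : t * (c * t + c) = c * (t * t) + c * t := by ring
        rw [h'] at h
        linarith [h, hmT]
      have e_b : 2 * (c * (c * α)) + c < Fintype.card V := by
        have h := Nat.mul_le_mul_left c (Nat.mul_le_mul_right α f5)
        have hα' : c * (2 ^ c * α) + c < Fintype.card V := by
          have := hα
          rw [Nat.mul_add, Nat.mul_one] at this
          exact this
        calc 2 * (c * (c * α)) + c = c * (2 * c * α) + c := by ring
          _ ≤ c * (2 ^ c * α) + c := Nat.add_le_add_right h c
          _ < Fintype.card V := hα'
      have e_c : c * (c * α) ≤ c * (c * α) * t := Nat.le_mul_of_pos_right _ (by omega)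
      have g1 := Nat.mul_le_mul_right t e_a
      have g1' : c * t * t = c * (t * t) := by ring
      rw [g1'] at g1
      have g2 := Nat.mul_le_mul_left t (le_of_lt e_b)
      have g2' : t * (2 * (c * (c * α)) + c) = 2 * (c * (c * α) * t) + c * t := by ring
      rw [g2'] at g2
      have g3 : c * 1 ≤ c * t := Nat.mul_le_mul_left c hT1
      have g4 : t * Fintype.card V = Fintype.card V * t := by ring
      linarith [hmT, e_c, g1, g2, g3]

/-- if `c ≥ 2`, every vertex of `G` (on `n` vertices) has degree at least
`n/c − 1`, and `2^c·α < n/c − 1` (i.e. `c·(2^c·α + 1) < n`), then every equivalence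
class of `~_α` has size at least `n/c` (i.e. `c·|U| ≥ n`). -/
theorem stmt2 {V : Type*} [Fintype V] [DecidableEq V] (G : SimpleGraph V)
    [DecidableRel G.Adj] (c α : ℕ) (hc : 2 ≤ c)
    (hdeg : ∀ v : V, Fintype.card V ≤ c * (G.degree v + 1))
    (hα : c * (2 ^ c * α + 1) < Fintype.card V) :
    ∀ U ∈ cutClasses G α, Fintype.card V ≤ c * U.card := by
  intro U hU
  obtain ⟨v, _, rfl⟩ := Finset.mem_image.mp hU
  refine main_aux G c α hc hdeg hα Finset.univ 0 v (Finset.mem_univ v)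
    (Finset.subset_univ _) ?_ ?_
  · rw [cutEdges_univ]
    exact Nat.zero_le _
  · simp
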